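/- Let b ∈ (0,3], T > 0, and let u be a classical solution of the b-equation on [0,T)×ℝ. If there exist t₀ ∈ (0,T), real numbers c < d, and an open set Ω ⊆ (0,T)×ℝ with {t₀}×[c,d] ⊆ Ω and u(t,x) = 0 for all (t,x) ∈ Ω, then u(t₀,x) = 0 for all x ∈ ℝ. -/

import Mathlib

open MeasureTheory Set

/-- The inverse Helmholtz operator `Λ⁻² = (1 - ∂ₓ²)⁻¹` on the line, given by
convolution with the kernel `e^{-|x|}/2`. -/
noncomputable def lam2 (w : ℝ → ℝ) (x : ℝ) : ℝ :=
  (1/2) * ∫ y : ℝ, Real.exp (-|x - y|) * w y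

/-- A classical solution of the `b`-equation
`uₜ + u uₓ = -∂ₓΛ⁻²((b/2)u² + ((3-b)/2)uₓ²)` on `[0,T) × ℝ`: for each `t ∈ [0,T)`,
`u(t,·)` is continuously differentiable with `u(t,·)` and `∂ₓu(t,·)` continuous,
bounded and integrable; `∂ₜu` exists on `(0,T) × ℝ`; and the equation holds
pointwise on `(0,T) × ℝ`. -/

noncomputable def lamA (F : ℝ → ℝ) (x : ℝ) : ℝ := ∫ y in Iic x, Real.exp y * F y
noncomputable def lamB (F : ℝ → ℝ) (x : ℝ) : ℝ := ∫ y in Ioi x, Real.exp (-y) * F y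

lemma intA (F : ℝ → ℝ) (hFi : Integrable F) (x : ℝ) :
    IntegrableOn (fun y => Real.exp y * F y) (Iic x) := by
  refine Integrable.bdd_mul (c := Real.exp x) hFi.restrict
    Real.continuous_exp.aestronglyMeasurable.restrict ?_
  refine (ae_restrict_iff' measurableSet_Iic).2 (Filter.Eventually.of_forall fun y hy => ?_)
  rw [Real.norm_eq_abs, abs_of_pos (Real.exp_pos y)]
  exact Real.exp_le_exp.2 hy

lemma intB (F : ℝ → ℝ) (hFi : Integrable F) (x : ℝ) :
    IntegrableOn (fun y => Real.exp (-y) * F y) (Ioi x) := by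
  refine Integrable.bdd_mul (c := Real.exp (-x)) hFi.restrict
    (Real.continuous_exp.comp continuous_neg).aestronglyMeasurable.restrict ?_
  refine (ae_restrict_iff' measurableSet_Ioi).2 (Filter.Eventually.of_forall fun y hy => ?_)
  rw [Real.norm_eq_abs, abs_of_pos (Real.exp_pos _)]
  exact Real.exp_le_exp.2 (by linarith [mem_Ioi.1 hy])

lemma intK (F : ℝ → ℝ) (hFi : Integrable F) (x : ℝ) :
    Integrable (fun y => Real.exp (-|x - y|) * F y) := by
  refine Integrable.bdd_mul (c := 1) hFi
    ((Real.continuous_exp.comp ((continuous_abs.comp (continuous_const.sub continuous_id)).neg)).aestronglyMeasurable) ?_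
  refine Filter.Eventually.of_forall fun y => ?_
  rw [Real.norm_eq_abs, abs_of_pos (Real.exp_pos _)]
  exact Real.exp_le_one_iff.2 (neg_nonpos.2 (abs_nonneg _))

lemma lam2_eq (F : ℝ → ℝ) (hFi : Integrable F) (x : ℝ) :
    lam2 F x = (1/2) * (Real.exp (-x) * lamA F x + Real.exp x * lamB F x) := by
  have hk := intK F hFi x
  have hsplit := intervalIntegral.integral_Iic_add_Ioi (b := x) hk.integrableOn hk.integrableOn
  have h1 : ∫ y in Iic x, Real.exp (-|x - y|) * F y = Real.exp (-x) * lamA F x := by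
    rw [lamA, ← integral_const_mul]
    refine setIntegral_congr_fun measurableSet_Iic fun y hy => ?_
    rw [← mul_assoc, ← Real.exp_add]
    congr 2
    rw [abs_of_nonneg (sub_nonneg.2 (mem_Iic.1 hy))]; ring
  have h2 : ∫ y in Ioi x, Real.exp (-|x - y|) * F y = Real.exp x * lamB F x := by
    rw [lamB, ← integral_const_mul]
    refine setIntegral_congr_fun measurableSet_Ioi fun y hy => ?_
    rw [← mul_assoc, ← Real.exp_add]
    congr 2
    rw [abs_of_nonpos (sub_nonpos.2 (le_of_lt (mem_Ioi.1 hy)))]; ring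
  rw [lam2, ← hsplit, h1, h2]

lemma hasDerivAt_lamA (F : ℝ → ℝ) (hFc : Continuous F) (hFi : Integrable F) (x : ℝ) :
    HasDerivAt (lamA F) (Real.exp x * F x) x := by
  have hg : Continuous fun y => Real.exp y * F y := Real.continuous_exp.mul hFc
  have hrepr : lamA F = fun t => lamA F 0 + ∫ y in (0:ℝ)..t, Real.exp y * F y := by
    funext t
    have h := intervalIntegral.integral_Iic_sub_Iic (intA F hFi 0) (intA F hFi t)
    simp only [lamA]
    linarith
  rw [hrepr]
  exact (intervalIntegral.integral_hasDerivAt_right (hg.intervalIntegrable _ _)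
    (hg.stronglyMeasurableAtFilter _ _) hg.continuousAt).const_add _

lemma lamB_split (F : ℝ → ℝ) (hFi : Integrable F) {a b : ℝ} (h : a ≤ b) :
    lamB F a = (∫ y in a..b, Real.exp (-y) * F y) + lamB F b := by
  have hu : Ioc a b ∪ Ioi b = Ioi a := Ioc_union_Ioi_eq_Ioi h
  rw [lamB, lamB, ← hu,
    setIntegral_union Ioc_disjoint_Ioi_same measurableSet_Ioi
      ((intB F hFi a).mono_set (hu ▸ subset_union_left)) (intB F hFi b),
    intervalIntegral.integral_of_le h]

lemma hasDerivAt_lamB (F : ℝ → ℝ) (hFc : Continuous F) (hFi : Integrable F) (x : ℝ) :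
    HasDerivAt (lamB F) (-(Real.exp (-x) * F x)) x := by
  have hg : Continuous fun y => Real.exp (-y) * F y :=
    (Real.continuous_exp.comp continuous_neg).mul hFc
  have hrepr : lamB F = fun t => lamB F 0 - ∫ y in (0:ℝ)..t, Real.exp (-y) * F y := by
    funext t
    rcases le_total t 0 with h | h
    · have h1 := lamB_split F hFi h
      have h2 := intervalIntegral.integral_symm (a := t) (b := 0)
        (f := fun y => Real.exp (-y) * F y) (μ := volume)
      rw [h2]
      linarith
    · have h1 := lamB_split F hFi h
      linarith
  rw [hrepr]
  exact (intervalIntegral.integral_hasDerivAt_right (hg.intervalIntegrable _ _)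
    (hg.stronglyMeasurableAtFilter _ _) hg.continuousAt).const_sub _

lemma hasDerivAt_lam2 (F : ℝ → ℝ) (hFc : Continuous F) (hFi : Integrable F) (x : ℝ) :
    HasDerivAt (lam2 F) ((1/2) * (Real.exp x * lamB F x - Real.exp (-x) * lamA F x)) x := by
  have hrepr : lam2 F = fun t => (1/2) * (Real.exp (-t) * lamA F t + Real.exp t * lamB F t) :=
    funext (lam2_eq F hFi)
  rw [hrepr]
  have hA := hasDerivAt_lamA F hFc hFi x
  have hB := hasDerivAt_lamB F hFc hFi x
  have he : HasDerivAt (fun t : ℝ => Real.exp (-t)) (-Real.exp (-x)) x := by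
    exact ((Real.hasDerivAt_exp (-x)).comp x (hasDerivAt_neg x)).congr_deriv (by ring)
  have hx : HasDerivAt Real.exp (Real.exp x) x := Real.hasDerivAt_exp x
  have h := ((he.mul hA).add (hx.mul hB)).const_mul (1/2 : ℝ)
  refine h.congr_deriv ?_
  have h1 : Real.exp (-x) * Real.exp x = 1 := by rw [← Real.exp_add]; simp
  ring

/-- A classical solution (docstring as in original). -/
def IsBEquationSolution (b T : ℝ) (u : ℝ → ℝ → ℝ) : Prop :=
  (∀ t ∈ Set.Ico (0:ℝ) T,
    ContDiff ℝ 1 (u t) ∧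
    (∃ C : ℝ, ∀ x, |u t x| ≤ C) ∧ Integrable (u t) ∧
    (∃ C : ℝ, ∀ x, |deriv (u t) x| ≤ C) ∧ Integrable (deriv (u t))) ∧
  (∀ t ∈ Set.Ioo (0:ℝ) T, ∀ x : ℝ, DifferentiableAt ℝ (fun s => u s x) t) ∧
  (∀ t ∈ Set.Ioo (0:ℝ) T, ∀ x : ℝ,
    deriv (fun s => u s x) t + u t x * deriv (u t) x =
      -(deriv (lam2 (fun y => (b/2) * (u t y)^2 + ((3-b)/2) * (deriv (u t) y)^2)) x))

/-- **Unique continuation for the `b`-equation, slice version (section 3.1).**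
If a classical solution of the `b`-equation, `b ∈ (0,3]`, vanishes on an open set
`Ω ⊆ (0,T) × ℝ` containing a slice `{t₀} × [c,d]`, then `u(t₀,·) ≡ 0`. -/
theorem bEquation_vanishing_on_slice (b T : ℝ) (hb : b ∈ Set.Ioc (0:ℝ) 3) (hT : 0 < T)
    (u : ℝ → ℝ → ℝ) (hu : IsBEquationSolution b T u)
    (t₀ : ℝ) (ht₀ : t₀ ∈ Set.Ioo (0:ℝ) T) (c d : ℝ) (hcd : c < d)
    (Ω : Set (ℝ × ℝ)) (hΩopen : IsOpen Ω)
    (hΩsub : Ω ⊆ Set.Ioo (0:ℝ) T ×ˢ Set.univ)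
    (hslice : {t₀} ×ˢ Set.Icc c d ⊆ Ω)
    (hvan : ∀ p ∈ Ω, u p.1 p.2 = 0) :
    ∀ x : ℝ, u t₀ x = 0 := by
  obtain ⟨hreg, hdt, heq⟩ := hu
  have ht₀' : t₀ ∈ Set.Ico (0:ℝ) T := ⟨le_of_lt ht₀.1, ht₀.2⟩
  obtain ⟨hsm, ⟨C₁, hC₁⟩, hint, ⟨C₂, hC₂⟩, hint'⟩ := hreg t₀ ht₀'
  set F : ℝ → ℝ := fun y => (b/2) * (u t₀ y)^2 + ((3-b)/2) * (deriv (u t₀) y)^2 with hFdef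
  have hc : Continuous (u t₀) := hsm.continuous
  have hc' : Continuous (deriv (u t₀)) := hsm.continuous_deriv le_rfl
  have hFc : Continuous F := by
    rw [hFdef]
    exact (continuous_const.mul (hc.pow 2)).add (continuous_const.mul (hc'.pow 2))
  have hFi : Integrable F := by
    have h1 : Integrable (fun y => u t₀ y * u t₀ y) :=
      hint.bdd_mul (c := C₁) hc.aestronglyMeasurable (Filter.Eventually.of_forall fun x => by simpa [Real.norm_eq_abs] using hC₁ x)
    have h2 : Integrable (fun y => deriv (u t₀) y * deriv (u t₀) y) :=
      hint'.bdd_mul (c := C₂) hc'.aestronglyMeasurable (Filter.Eventually.of_forall fun x => by simpa [Real.norm_eq_abs] using hC₂ x)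
    have : F = fun y => (b/2) * (u t₀ y * u t₀ y) + ((3-b)/2) * (deriv (u t₀) y * deriv (u t₀) y) := by
      funext y; rw [hFdef]; ring
    rw [this]
    exact (h1.const_mul _).add (h2.const_mul _)
  have hFnn : ∀ y, 0 ≤ F y := fun y =>
    add_nonneg (mul_nonneg (by linarith [hb.1]) (sq_nonneg _))
      (mul_nonneg (by linarith [hb.2]) (sq_nonneg _))
  -- vanishing on the slice
  have hzero : ∀ x ∈ Set.Icc c d, u t₀ x = 0 := fun x hx =>
    hvan _ (hslice (Set.mk_mem_prod rfl hx))
  -- time derivative vanishes on the slice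
  have hdt0 : ∀ x ∈ Set.Icc c d, deriv (fun s => u s x) t₀ = 0 := by
    intro x hx
    have hmem : Ω ∈ nhds (t₀, x) := hΩopen.mem_nhds (hslice (Set.mk_mem_prod rfl hx))
    have hpre : (fun s : ℝ => (s, x)) ⁻¹' Ω ∈ nhds t₀ :=
      (continuous_id.prodMk continuous_const).continuousAt.preimage_mem_nhds hmem
    have hev : (fun s => u s x) =ᶠ[nhds t₀] fun _ => (0:ℝ) := by
      filter_upwards [hpre] with s hs using hvan _ hs
    rw [hev.deriv_eq, deriv_const]
  -- space derivative vanishes inside the slice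
  have hdx0 : ∀ x ∈ Set.Ioo c d, deriv (u t₀) x = 0 := by
    intro x hx
    have hev : u t₀ =ᶠ[nhds x] fun _ => (0:ℝ) := by
      filter_upwards [Ioo_mem_nhds hx.1 hx.2] with y hy using hzero y (Set.Ioo_subset_Icc_self hy)
    rw [hev.deriv_eq, deriv_const]
  -- key identity from the equation
  have hkey : ∀ x ∈ Set.Icc c d, Real.exp x * lamB F x = Real.exp (-x) * lamA F x := by
    intro x hx
    have he := heq t₀ ht₀ x
    rw [← hFdef] at he
    rw [hdt0 x hx, hzero x hx, (hasDerivAt_lam2 F hFc hFi x).deriv] at he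
    simp only [zero_mul, zero_add] at he
    linarith
  set x₀ : ℝ := (c + d) / 2 with hx₀def
  have hx₀ : x₀ ∈ Set.Ioo c d := ⟨by rw [hx₀def]; linarith, by rw [hx₀def]; linarith⟩
  have hFx₀ : F x₀ = 0 := by
    show (b/2) * (u t₀ x₀)^2 + ((3-b)/2) * (deriv (u t₀) x₀)^2 = 0
    rw [hzero x₀ (Set.Ioo_subset_Icc_self hx₀), hdx0 x₀ hx₀]
    ring
  -- the function φ = e^{2x} B - A vanishes near x₀
  have hφev : (fun x => Real.exp (2*x) * lamB F x - lamA F x) =ᶠ[nhds x₀] fun _ => (0:ℝ) := by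
    filter_upwards [Ioo_mem_nhds hx₀.1 hx₀.2] with y hy
    have hk := hkey y (Set.Ioo_subset_Icc_self hy)
    have h2y : Real.exp (2*y) = Real.exp y * Real.exp y := by rw [← Real.exp_add]; ring_nf
    have h1 : Real.exp y * Real.exp (-y) = 1 := by rw [← Real.exp_add]; simp
    rw [h2y, mul_assoc, hk, ← mul_assoc, h1, one_mul, sub_self]
  have hφ : HasDerivAt (fun x => Real.exp (2*x) * lamB F x - lamA F x)
      ((Real.exp (2*x₀) * 2) * lamB F x₀ + Real.exp (2*x₀) * (-(Real.exp (-x₀) * F x₀))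
        - Real.exp x₀ * F x₀) x₀ := by
    have h2x : HasDerivAt (fun x : ℝ => Real.exp (2*x)) (Real.exp (2*x₀) * 2) x₀ := by
      exact ((Real.hasDerivAt_exp (2*x₀)).comp x₀ ((hasDerivAt_id x₀).const_mul 2)).congr_deriv (by ring)
    exact (h2x.mul (hasDerivAt_lamB F hFc hFi x₀)).sub (hasDerivAt_lamA F hFc hFi x₀)
  have hφ0 : (Real.exp (2*x₀) * 2) * lamB F x₀ + Real.exp (2*x₀) * (-(Real.exp (-x₀) * F x₀))
      - Real.exp x₀ * F x₀ = 0 := by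
    rw [← hφ.deriv, hφev.deriv_eq, deriv_const]
  have hB0 : lamB F x₀ = 0 := by
    rw [hFx₀] at hφ0
    have hpos : Real.exp (2*x₀) * 2 ≠ 0 := by positivity
    have : (Real.exp (2*x₀) * 2) * lamB F x₀ = 0 := by linarith
    exact (mul_eq_zero.mp this).resolve_left hpos
  have hA0 : lamA F x₀ = 0 := by
    have hk := hkey x₀ (Set.Ioo_subset_Icc_self hx₀)
    rw [hB0, mul_zero] at hk
    have := Real.exp_pos (-x₀)
    nlinarith
  -- total integral of the nonnegative kernel-weighted F is zero
  have hint0 : ∫ y : ℝ, Real.exp (-|x₀ - y|) * F y = 0 := by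
    have h := lam2_eq F hFi x₀
    rw [hA0, hB0, lam2] at h
    simp only [mul_zero, add_zero, zero_add] at h
    linarith
  have hknn : ∀ y, 0 ≤ Real.exp (-|x₀ - y|) * F y := fun y =>
    mul_nonneg (le_of_lt (Real.exp_pos _)) (hFnn y)
  have hkc : Continuous (fun y => Real.exp (-|x₀ - y|) * F y) :=
    (Real.continuous_exp.comp ((continuous_abs.comp (continuous_const.sub continuous_id)).neg)).mul hFc
  have hkall : (fun y => Real.exp (-|x₀ - y|) * F y) = fun _ => (0:ℝ) := by
    have hae := (integral_eq_zero_iff_of_nonneg hknn (intK F hFi x₀)).mp hint0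
    exact (Continuous.ae_eq_iff_eq volume hkc continuous_const).mp hae
  intro x
  have hFx : F x = 0 := by
    have h := congrFun hkall x
    rcases mul_eq_zero.mp h with h' | h'
    · exact absurd h' (Real.exp_ne_zero _)
    · exact h'
  have hsq : (b/2) * (u t₀ x)^2 = 0 := by
    have h1 : 0 ≤ (b/2) * (u t₀ x)^2 := mul_nonneg (by linarith [hb.1]) (sq_nonneg _)
    have h2 : 0 ≤ ((3-b)/2) * (deriv (u t₀) x)^2 := mul_nonneg (by linarith [hb.2]) (sq_nonneg _)
    have h3 : (b/2) * (u t₀ x)^2 + ((3-b)/2) * (deriv (u t₀) x)^2 = 0 := hFx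
    linarith
  have hb2 : (b/2 : ℝ) ≠ 0 := ne_of_gt (by linarith [hb.1])
  have h := (mul_eq_zero.mp hsq).resolve_left hb2
  exact (pow_eq_zero_iff two_ne_zero).mp h
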